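/- arXiv:1602.00164 — 5 statements merged into one kernel-verified Lean document; each statement's English description precedes it below -/
import Mathlib

section
/- For every z₁, z₂ ∈ ℂ and every point x of Rep(Q̄,α), the complex moment map satisfies μ_ℂ(z·x) = z₁² μ_ℂ(x) − z₂² μ_ℂ(x)† − 2√−1 z₁z₂ μ_ℝ(x), where z = z₁ + z₂𝐣 acts by the quaternionic action and † denotes componentwise conjugate transpose (equality of tuples in ∏_{v∈Q₀} M_{α_v}(ℂ)). -/
open Matrix Finset

namespace QuiverMomentMaps

/-- Cast a matrix along equalities of its dimensions. -/
def castM {m n m' n' : ℕ} (hm : m = m') (hn : n = n')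
    (M : Matrix (Fin m) (Fin n) ℂ) : Matrix (Fin m') (Fin n') ℂ :=
  Matrix.of fun i j => M (Fin.cast hm.symm i) (Fin.cast hn.symm j)

lemma castM_add {m n m' n' : ℕ} (hm : m = m') (hn : n = n')
    (M N : Matrix (Fin m) (Fin n) ℂ) :
    castM hm hn (M + N) = castM hm hn M + castM hm hn N := rfl

lemma castM_sub {m n m' n' : ℕ} (hm : m = m') (hn : n = n')
    (M N : Matrix (Fin m) (Fin n) ℂ) :
    castM hm hn (M - N) = castM hm hn M - castM hm hn N := rfl

lemma castM_smul {m n m' n' : ℕ} (hm : m = m') (hn : n = n') (c : ℂ)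
    (M : Matrix (Fin m) (Fin n) ℂ) :
    castM hm hn (c • M) = c • castM hm hn M := rfl

lemma castM_conjT {m n m' n' : ℕ} (hm : m = m') (hn : n = n')
    (M : Matrix (Fin m) (Fin n) ℂ) :
    (castM hm hn M)ᴴ = castM hn hm Mᴴ := rfl

variable {V A : Type} [Fintype V] [Fintype A] [DecidableEq V]

/-- A point of `Rep(Q̄,α)`: for each arrow `a` of the quiver `Q = (V, A, t, h)` a matrix
`x_a` of size `α(h a) × α(t a)` together with a matrix `x_{a*}` of size `α(t a) × α(h a)`. -/
abbrev RepX (t h : A → V) (α : V → ℕ) : Type :=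
  (∀ a : A, Matrix (Fin (α (h a))) (Fin (α (t a))) ℂ) ×
    (∀ a : A, Matrix (Fin (α (t a))) (Fin (α (h a))) ℂ)

/-- The complex moment map `μ_ℂ`; its `v`-component is
`Σ_{a : h(a)=v} x_a x_{a*} − Σ_{a : t(a)=v} x_{a*} x_a`. -/
noncomputable def muC (t h : A → V) (α : V → ℕ) (x : RepX t h α) (v : V) :
    Matrix (Fin (α v)) (Fin (α v)) ℂ :=
  (∑ a : A, if ha : h a = v then
      castM (congrArg α ha) (congrArg α ha) (x.1 a * x.2 a) else 0)
    - ∑ a : A, if ha : t a = v then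
      castM (congrArg α ha) (congrArg α ha) (x.2 a * x.1 a) else 0

/-- The real moment map `μ_ℝ`; its `v`-component is
`(√−1/2)(Σ_{a : h(a)=v}(x_a x_a† − x_{a*}† x_{a*}) + Σ_{a : t(a)=v}(x_{a*} x_{a*}† − x_a† x_a))`. -/
noncomputable def muR (t h : A → V) (α : V → ℕ) (x : RepX t h α) (v : V) :
    Matrix (Fin (α v)) (Fin (α v)) ℂ :=
  (Complex.I / 2) •
    ((∑ a : A, if ha : h a = v then
        castM (congrArg α ha) (congrArg α ha) (x.1 a * (x.1 a)ᴴ - (x.2 a)ᴴ * x.2 a) else 0)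
      + ∑ a : A, if ha : t a = v then
        castM (congrArg α ha) (congrArg α ha) (x.2 a * (x.2 a)ᴴ - (x.1 a)ᴴ * x.1 a) else 0)

/-- The quaternionic action of `z = z₁ + z₂𝐣` on `Rep(Q̄,α)`:
`(z·x)_a = z₁x_a − z₂x_{a*}†` and `(z·x)_{a*} = z₁x_{a*} + z₂x_a†`. -/
noncomputable def qact (t h : A → V) (α : V → ℕ) (z₁ z₂ : ℂ) (x : RepX t h α) : RepX t h α :=
  (fun a => z₁ • x.1 a - z₂ • (x.2 a)ᴴ, fun a => z₁ • x.2 a + z₂ • (x.1 a)ᴴ)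

/-- **Equation (3.2) of Bellamy–Schedler.**  For every `z₁, z₂ ∈ ℂ` and every point `x` of
`Rep(Q̄,α)`, the complex moment map satisfies
`μ_ℂ(z·x) = z₁² μ_ℂ(x) − z₂² μ_ℂ(x)† − 2√−1 z₁z₂ μ_ℝ(x)`
(componentwise over the vertices, `†` being componentwise conjugate transpose). -/
theorem stmt_0 (t h : A → V) (α : V → ℕ) (z₁ z₂ : ℂ) (x : RepX t h α) (v : V) :
    muC t h α (qact t h α z₁ z₂ x) v =
      z₁ ^ 2 • muC t h α x v - z₂ ^ 2 • (muC t h α x v)ᴴ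
        - (2 * Complex.I * z₁ * z₂) • muR t h α x v := by
  unfold muC muR qact
  simp only [conjTranspose_sub, conjTranspose_sum, smul_sub, smul_add, Finset.smul_sum,
    smul_smul]
  have hH : ∀ a : A,
      (if ha : h a = v then castM (congrArg α ha) (congrArg α ha)
          ((z₁ • x.1 a - z₂ • (x.2 a)ᴴ) * (z₁ • x.2 a + z₂ • (x.1 a)ᴴ)) else 0)
      = (z₁ ^ 2) • (if ha : h a = v then castM (congrArg α ha) (congrArg α ha)
            (x.1 a * x.2 a) else 0)
        - (z₂ ^ 2) • (if ha : h a = v then castM (congrArg α ha) (congrArg α ha)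
            (x.1 a * x.2 a) else 0)ᴴ
        + (z₁ * z₂) • (if ha : h a = v then castM (congrArg α ha) (congrArg α ha)
            (x.1 a * (x.1 a)ᴴ - (x.2 a)ᴴ * x.2 a) else 0) := by
    intro a
    by_cases ha : h a = v
    · simp only [dif_pos ha, castM_conjT]
      rw [← castM_smul, ← castM_smul, ← castM_smul, ← castM_sub, ← castM_add]
      refine congrArg (castM _ _) ?_
      simp only [Matrix.mul_add, Matrix.sub_mul, Matrix.smul_mul, Matrix.mul_smul,
        conjTranspose_mul, smul_smul, smul_sub]
      module
    · simp [ha]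
  have hT : ∀ a : A,
      (if ha : t a = v then castM (congrArg α ha) (congrArg α ha)
          ((z₁ • x.2 a + z₂ • (x.1 a)ᴴ) * (z₁ • x.1 a - z₂ • (x.2 a)ᴴ)) else 0)
      = (z₁ ^ 2) • (if ha : t a = v then castM (congrArg α ha) (congrArg α ha)
            (x.2 a * x.1 a) else 0)
        - (z₂ ^ 2) • (if ha : t a = v then castM (congrArg α ha) (congrArg α ha)
            (x.2 a * x.1 a) else 0)ᴴ
        - (z₁ * z₂) • (if ha : t a = v then castM (congrArg α ha) (congrArg α ha)
            (x.2 a * (x.2 a)ᴴ - (x.1 a)ᴴ * x.1 a) else 0) := by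
    intro a
    by_cases ha : t a = v
    · simp only [dif_pos ha, castM_conjT]
      rw [← castM_smul, ← castM_smul, ← castM_smul, ← castM_sub, ← castM_sub]
      refine congrArg (castM _ _) ?_
      simp only [Matrix.mul_add, Matrix.add_mul, Matrix.mul_sub, Matrix.sub_mul,
        Matrix.smul_mul, Matrix.mul_smul, conjTranspose_mul, smul_smul, smul_sub]
      module
    · simp [ha]
  simp_rw [hH, hT]
  rw [Finset.sum_add_distrib, Finset.sum_sub_distrib, Finset.sum_sub_distrib,
    Finset.sum_sub_distrib]
  simp only [← Finset.smul_sum]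
  have hc : 2 * Complex.I * z₁ * z₂ * (Complex.I / 2) = -(z₁ * z₂) := by
    linear_combination (z₁ * z₂) * Complex.I_mul_I
  rw [hc]
  module

end QuiverMomentMaps
end

section
/- For every z₁, z₂ ∈ ℂ and every point x of Rep(Q̄,α), the real moment map satisfies μ_ℝ(z·x) = (|z₁|² − |z₂|²) μ_ℝ(x) − √−1 z₁\bar{z₂} μ_ℂ(x) − √−1 z₂\bar{z₁} μ_ℂ(x)†, where z = z₁ + z₂𝐣 acts by the quaternionic action and † denotes componentwise conjugate transpose (equality of tuples in ∏_{v∈Q₀} M_{α_v}(ℂ)). -/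
open Matrix Finset

namespace QuiverMomentMaps

lemma castM_rfl {m n : ℕ} (M : Matrix (Fin m) (Fin n) ℂ) : castM rfl rfl M = M := rfl

lemma key_h {p q : ℕ} (z₁ z₂ : ℂ) (X : Matrix (Fin p) (Fin q) ℂ) (Y : Matrix (Fin q) (Fin p) ℂ) :
    (Complex.I / 2) • ((z₁ • X - z₂ • Yᴴ) * (z₁ • X - z₂ • Yᴴ)ᴴ
        - (z₁ • Y + z₂ • Xᴴ)ᴴ * (z₁ • Y + z₂ • Xᴴ)) =
      ((Complex.normSq z₁ : ℂ) - (Complex.normSq z₂ : ℂ)) •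
          ((Complex.I / 2) • (X * Xᴴ - Yᴴ * Y))
        - (Complex.I * z₁ * (starRingEnd ℂ) z₂) • (X * Y)
        - (Complex.I * z₂ * (starRingEnd ℂ) z₁) • (X * Y)ᴴ := by
  rw [← Complex.mul_conj z₁, ← Complex.mul_conj z₂]
  simp only [conjTranspose_sub, conjTranspose_add, conjTranspose_smul, conjTranspose_conjTranspose,
    conjTranspose_mul, Matrix.sub_mul, Matrix.mul_sub, Matrix.add_mul, Matrix.mul_add,
    Matrix.smul_mul, Matrix.mul_smul, smul_smul, smul_sub, smul_add, RingHom.id_apply,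
    starRingEnd_apply]
  module

lemma key_t {p q : ℕ} (z₁ z₂ : ℂ) (X : Matrix (Fin p) (Fin q) ℂ) (Y : Matrix (Fin q) (Fin p) ℂ) :
    (Complex.I / 2) • ((z₁ • Y + z₂ • Xᴴ) * (z₁ • Y + z₂ • Xᴴ)ᴴ
        - (z₁ • X - z₂ • Yᴴ)ᴴ * (z₁ • X - z₂ • Yᴴ)) =
      ((Complex.normSq z₁ : ℂ) - (Complex.normSq z₂ : ℂ)) •
          ((Complex.I / 2) • (Y * Yᴴ - Xᴴ * X))
        + (Complex.I * z₁ * (starRingEnd ℂ) z₂) • (Y * X)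
        + (Complex.I * z₂ * (starRingEnd ℂ) z₁) • (Y * X)ᴴ := by
  rw [← Complex.mul_conj z₁, ← Complex.mul_conj z₂]
  simp only [conjTranspose_sub, conjTranspose_add, conjTranspose_smul, conjTranspose_conjTranspose,
    conjTranspose_mul, Matrix.sub_mul, Matrix.mul_sub, Matrix.add_mul, Matrix.mul_add,
    Matrix.smul_mul, Matrix.mul_smul, smul_smul, smul_sub, smul_add, RingHom.id_apply,
    starRingEnd_apply]
  module

lemma key_h_cast {p q m : ℕ} (e : p = m) (z₁ z₂ : ℂ)
    (X : Matrix (Fin p) (Fin q) ℂ) (Y : Matrix (Fin q) (Fin p) ℂ) :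
    (Complex.I / 2) • castM e e ((z₁ • X - z₂ • Yᴴ) * (z₁ • X - z₂ • Yᴴ)ᴴ
        - (z₁ • Y + z₂ • Xᴴ)ᴴ * (z₁ • Y + z₂ • Xᴴ)) =
      ((Complex.normSq z₁ : ℂ) - (Complex.normSq z₂ : ℂ)) •
          ((Complex.I / 2) • castM e e (X * Xᴴ - Yᴴ * Y))
        - (Complex.I * z₁ * (starRingEnd ℂ) z₂) • castM e e (X * Y)
        - (Complex.I * z₂ * (starRingEnd ℂ) z₁) • (castM e e (X * Y))ᴴ := by
  subst e; simp only [castM_rfl]; exact key_h z₁ z₂ X Y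

lemma key_t_cast {p q m : ℕ} (e : q = m) (z₁ z₂ : ℂ)
    (X : Matrix (Fin p) (Fin q) ℂ) (Y : Matrix (Fin q) (Fin p) ℂ) :
    (Complex.I / 2) • castM e e ((z₁ • Y + z₂ • Xᴴ) * (z₁ • Y + z₂ • Xᴴ)ᴴ
        - (z₁ • X - z₂ • Yᴴ)ᴴ * (z₁ • X - z₂ • Yᴴ)) =
      ((Complex.normSq z₁ : ℂ) - (Complex.normSq z₂ : ℂ)) •
          ((Complex.I / 2) • castM e e (Y * Yᴴ - Xᴴ * X))
        + (Complex.I * z₁ * (starRingEnd ℂ) z₂) • castM e e (Y * X)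
        + (Complex.I * z₂ * (starRingEnd ℂ) z₁) • (castM e e (Y * X))ᴴ := by
  subst e; simp only [castM_rfl]; exact key_t z₁ z₂ X Y

variable {V A : Type} [Fintype V] [Fintype A] [DecidableEq V]

/-- **Equation (3.1) of Bellamy–Schedler.**  For every `z₁, z₂ ∈ ℂ` and every point `x` of
`Rep(Q̄,α)`, the real moment map satisfies
`μ_ℝ(z·x) = (|z₁|² − |z₂|²) μ_ℝ(x) − √−1 z₁ z̄₂ μ_ℂ(x) − √−1 z₂ z̄₁ μ_ℂ(x)†`
(componentwise over the vertices, `†` being componentwise conjugate transpose). -/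
theorem stmt_1 (t h : A → V) (α : V → ℕ) (z₁ z₂ : ℂ) (x : RepX t h α) (v : V) :
    muR t h α (qact t h α z₁ z₂ x) v =
      ((Complex.normSq z₁ : ℂ) - (Complex.normSq z₂ : ℂ)) • muR t h α x v
        - (Complex.I * z₁ * (starRingEnd ℂ) z₂) • muC t h α x v
        - (Complex.I * z₂ * (starRingEnd ℂ) z₁) • (muC t h α x v)ᴴ := by
  simp only [muR, muC, qact]
  rw [Matrix.conjTranspose_sub, Matrix.conjTranspose_sum, Matrix.conjTranspose_sum]
  simp only [apply_dite Matrix.conjTranspose, Matrix.conjTranspose_zero]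
  simp only [Finset.smul_sum, smul_sub, smul_add, ← Finset.sum_add_distrib,
    ← Finset.sum_sub_distrib]
  refine Finset.sum_congr rfl fun a _ => ?_
  by_cases hh : h a = v <;> by_cases ht : t a = v <;>
    simp only [dif_pos, dif_neg, hh, ht, dite_true, dite_false, smul_zero,
      add_zero, zero_add, sub_zero, zero_sub, Matrix.conjTranspose_zero]
  · rw [key_h_cast (congrArg α hh) z₁ z₂ (x.1 a) (x.2 a),
      key_t_cast (congrArg α ht) z₁ z₂ (x.1 a) (x.2 a)]
    abel
  · exact key_h_cast (congrArg α hh) z₁ z₂ (x.1 a) (x.2 a)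
  · rw [key_t_cast (congrArg α ht) z₁ z₂ (x.1 a) (x.2 a)]
    abel

end QuiverMomentMaps
end

section
/- Let d, n ≥ 2 be integers with (n,d) ≠ (2,2). Let k ≥ 1 and let ℓ_1,…,ℓ_k and ν_1,…,ν_k be positive integers with Σ_{i=1}^k ℓ_i ν_i = n, and assume it is not the case that k = 1 and ℓ_1 = 1. Then 2(n²(d−1)+1) − 2(k + (d−1)Σ_{i=1}^k ν_i²) ≥ 4. -/
open Finset

set_option maxHeartbeats 1000000

private lemma final_step (d n k S : ℤ) (hd : 2 ≤ d) (hk : 0 ≤ k)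
    (h : k + 1 ≤ n ^ 2 - S) :
    (4 : ℤ) ≤ 2 * (n ^ 2 * (d - 1) + 1) - 2 * (k + (d - 1) * S) := by
  have h1 : (0:ℤ) ≤ d - 1 := by linarith
  have h2 := mul_le_mul_of_nonneg_left h h1
  nlinarith [mul_nonneg (show (0:ℤ) ≤ d - 2 by linarith) (show (0:ℤ) ≤ k + 1 by linarith)]

/-- **Lemma 6.1(3) of Bellamy–Schedler (arithemtic content).**
For the quiver variety `Char(n,d)`, the open stratum has dimension `2(n²(d−1)+1)` and the
stratum of representation type given by the weighted partition `(ℓ_1,ν_1;…;ℓ_k,ν_k)` of `n`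
has dimension `2(k + (d−1)Σνᵢ²)`.  If `d, n ≥ 2`, `(n,d) ≠ (2,2)` and the weighted partition
is not the trivial one `(1, n)` (i.e. it is not the case that `k = 1` and `ℓ_1 = 1`), then
every stratum other than the open one has codimension at least `4`. -/
theorem stmt_4 (d n : ℕ) (hd : 2 ≤ d) (hn : 2 ≤ n) (hnd : (n, d) ≠ (2, 2))
    (k : ℕ) (hk : 1 ≤ k) (ℓ ν : Fin k → ℕ)
    (hℓ : ∀ i, 1 ≤ ℓ i) (hν : ∀ i, 1 ≤ ν i)
    (hsum : ∑ i, ℓ i * ν i = n)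
    (hnontriv : ¬ (k = 1 ∧ ∀ i, ℓ i = 1)) :
    (4 : ℤ) ≤ 2 * ((n : ℤ) ^ 2 * ((d : ℤ) - 1) + 1)
      - 2 * ((k : ℤ) + ((d : ℤ) - 1) * ∑ i, (ν i : ℤ) ^ 2) := by
  set S : ℤ := ∑ i, (ν i : ℤ) ^ 2 with hS
  set M : ℤ := ∑ i, (ν i : ℤ) with hM
  have hd' : (2:ℤ) ≤ d := by exact_mod_cast hd
  have hν' : ∀ i, (1:ℤ) ≤ ν i := fun i => by exact_mod_cast hν i
  have hℓ' : ∀ i, (1:ℤ) ≤ ℓ i := fun i => by exact_mod_cast hℓ i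
  have hνM : ∀ i, (ν i : ℤ) ≤ M := fun i =>
    Finset.single_le_sum (f := fun j => (ν j : ℤ)) (fun j _ => by linarith [hν' j]) (mem_univ i)
  have hMn : M ≤ (n:ℤ) := by
    have hcast : (n:ℤ) = ∑ i, (ℓ i : ℤ) * ν i := by
      rw [← hsum]; push_cast; ring
    rw [hcast, hM]
    apply Finset.sum_le_sum
    intro i _
    nlinarith [hℓ' i, hν' i]
  have hkM : (k:ℤ) ≤ M := by
    have : ∑ _i : Fin k, (1:ℤ) ≤ M := Finset.sum_le_sum (fun i _ => hν' i)
    simpa using this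
  have hkS : (k:ℤ) ≤ S := by
    have : ∑ _i : Fin k, (1:ℤ) ≤ S := Finset.sum_le_sum (fun i _ => by nlinarith [hν' i])
    simpa using this
  have key : S + ((k:ℤ) - 1) * M ≤ M ^ 2 := by
    have h1 : ∀ i ∈ (univ : Finset (Fin k)), (ν i:ℤ)^2 + (M - ν i) ≤ (ν i:ℤ) * M := by
      intro i _
      nlinarith [hν' i, hνM i]
    have h2 := Finset.sum_le_sum h1
    have e1 : ∑ i, ((ν i:ℤ)^2 + (M - ν i)) = S + ((k:ℤ) * M - M) := by
      rw [Finset.sum_add_distrib, Finset.sum_sub_distrib, Finset.sum_const]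
      simp [hS, hM, mul_comm]
    have e2 : ∑ i, (ν i:ℤ) * M = M * M := by
      rw [← Finset.sum_mul, ← hM, mul_comm]
    rw [e1, e2] at h2
    nlinarith [h2]
  clear_value S M
  -- main inequality: k+1 ≤ n² − S  (except the special case n = 2, k = 2, d ≥ 3)
  rcases Nat.lt_or_ge k 3 with h3 | h3
  · obtain rfl | rfl : k = 1 ∨ k = 2 := by omega
    · -- k = 1
      have hl1 : ¬ ∀ i, ℓ i = 1 := fun h => hnontriv ⟨rfl, h⟩
      push_neg at hl1
      obtain ⟨i, hi⟩ := hl1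
      have hi0 : i = 0 := Subsingleton.elim i 0
      have hℓ2 : (2:ℤ) ≤ ℓ 0 := by
        have h1 := hℓ 0
        have h2 : ℓ 0 ≠ 1 := hi0 ▸ hi
        exact_mod_cast (by omega : 2 ≤ ℓ 0)
      have hn0 : (n:ℤ) = (ℓ 0 : ℤ) * ν 0 := by
        rw [← hsum, Fin.sum_univ_one]; push_cast; ring
      have hSv : S = (ν 0:ℤ)^2 := by simp [hS, Fin.sum_univ_one]
      apply final_step _ _ _ _ hd' (by norm_num)
      rw [hSv]
      have hn2 : (n:ℤ)^2 = (ℓ 0:ℤ)^2 * (ν 0:ℤ)^2 := by rw [hn0]; ring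
      have h1 : (4:ℤ) ≤ (ℓ 0:ℤ)^2 := by nlinarith [hℓ2]
      have h2 : (1:ℤ) ≤ (ν 0:ℤ)^2 := by nlinarith [hν' 0]
      have h4 : 4*(ν 0:ℤ)^2 ≤ (ℓ 0:ℤ)^2*(ν 0:ℤ)^2 :=
        mul_le_mul_of_nonneg_right h1 (sq_nonneg _)
      push_cast
      linarith
    · -- k = 2
      rcases eq_or_lt_of_le hn with hn2 | hn3
      · -- n = 2
        have hn2' : n = 2 := hn2.symm
        subst hn2'
        have hd3 : (3:ℤ) ≤ d := by
          have : d ≠ 2 := fun h => hnd (by simp [h])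
          exact_mod_cast (by omega : 3 ≤ d)
        have hM2 : M = 2 := le_antisymm (by exact_mod_cast hMn) (by exact_mod_cast hkM)
        have hS2 : S = 2 := by
          have h1 : S ≤ 2 := by nlinarith [key, hM2]
          have h2 : (2:ℤ) ≤ S := by exact_mod_cast hkS
          linarith
        rw [hS2]
        push_cast
        linarith
      · -- n ≥ 3
        have hn3' : (3:ℤ) ≤ n := by exact_mod_cast hn3
        apply final_step _ _ _ _ hd' (by norm_num)
        push_cast
        rcases eq_or_lt_of_le hMn with hMeq | hMlt
        · -- M = n
          rw [hMeq] at key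
          push_cast at key
          linarith
        · -- M + 1 ≤ n
          have h1 : M + 1 ≤ (n:ℤ) := hMlt
          nlinarith [key, hkM, mul_le_mul h1 h1 (by linarith) (by linarith)]
  · -- k ≥ 3
    have hk3 : (3:ℤ) ≤ k := by exact_mod_cast h3
    apply final_step _ _ _ _ hd' (by positivity)
    have hM0 : (0:ℤ) ≤ M := by linarith
    have hMn2 : M ^ 2 ≤ (n:ℤ) ^ 2 := pow_le_pow_left₀ hM0 hMn 2
    have hMk2 : ((k:ℤ)-1)*(k:ℤ) ≤ ((k:ℤ)-1)*M := by
      have h0 : (0:ℤ) ≤ (k:ℤ) - 1 := by linarith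
      exact mul_le_mul_of_nonneg_left hkM h0
    have hkk : (k:ℤ)+1 ≤ ((k:ℤ)-1)*(k:ℤ) := by nlinarith [sq_nonneg ((k:ℤ)-3), hk3]
    linarith [key, hMn2, hMk2, hkk]
end

section
/- Let g, n ≥ 1. The assignment (A_l, A*_l)_{l=1}^g ↦ (A_l, A_l^{-1} + A*_l)_{l=1}^g defines a bijection from the set {(A_l, A*_l) ∈ (M_n(ℂ) × M_n(ℂ))^g : each A_l, each 1 + A_lA*_l and each 1 + A*_lA_l is invertible, and Π_{l=1}^g (1 + A_lA*_l)(1 + A*_lA_l)^{-1} = 1} onto the set {(A_l, B_l) ∈ (GL_n(ℂ) × GL_n(ℂ))^g : Π_{l=1}^g A_lB_lA_l^{-1}B_l^{-1} = 1}, and this bijection is equivariant for the simultaneous conjugation action of GL_n(ℂ) on both sets. (The target set is in natural bijection with Hom(π_g, GL_n(ℂ)) for the genus-g surface group π_g.) -/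
noncomputable section
namespace MultiplicativePreprojective

abbrev Mat (n : ℕ) : Type := Matrix (Fin n) (Fin n) ℂ

/-- The fiber `Ψ⁻¹(1)` of the multiplicative moment map for the quiver with one vertex
and `g` loops: the tuples `(A_l, A*_l)` of `n×n` matrices such that each `A_l`,
`1 + A_lA*_l` and `1 + A*_lA_l` is invertible, and
`Π_{l=1}^g (1 + A_lA*_l)(1 + A*_lA_l)⁻¹ = 1` (ordered product). -/
def Src (n g : ℕ) : Set (Fin g → Mat n × Mat n) :=
  {p | (∀ l, IsUnit (p l).1 ∧ IsUnit (1 + (p l).1 * (p l).2) ∧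
        IsUnit (1 + (p l).2 * (p l).1)) ∧
    (List.ofFn fun l : Fin g =>
      (1 + (p l).1 * (p l).2) * (1 + (p l).2 * (p l).1)⁻¹).prod = 1}

/-- The set of tuples `(A_l, B_l)` of invertible matrices with
`Π_{l=1}^g A_lB_lA_l⁻¹B_l⁻¹ = 1`, which is in natural bijection with
`Hom(π_g, GL_n(ℂ))` for the genus-`g` surface group `π_g`. -/
def Tgt (n g : ℕ) : Set (Fin g → Mat n × Mat n) :=
  {q | (∀ l, IsUnit (q l).1 ∧ IsUnit (q l).2) ∧
    (List.ofFn fun l : Fin g =>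
      (q l).1 * (q l).2 * ((q l).1)⁻¹ * ((q l).2)⁻¹).prod = 1}

/-- The map `(A_l, A*_l) ↦ (A_l, A_l⁻¹ + A*_l)`. -/
def Phi (n g : ℕ) (p : Fin g → Mat n × Mat n) : Fin g → Mat n × Mat n :=
  fun l => ((p l).1, ((p l).1)⁻¹ + (p l).2)

/-- Simultaneous conjugation by `u ∈ GL_n(ℂ)`. -/
def conjAct (n g : ℕ) (u : GL (Fin n) ℂ) (p : Fin g → Mat n × Mat n) :
    Fin g → Mat n × Mat n :=
  fun l => ((u : Mat n) * (p l).1 * ((u⁻¹ : GL (Fin n) ℂ) : Mat n),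
    (u : Mat n) * (p l).2 * ((u⁻¹ : GL (Fin n) ℂ) : Mat n))

lemma mul_nonsing {n : ℕ} {A : Mat n} (hA : IsUnit A) : A * A⁻¹ = 1 :=
  Matrix.mul_nonsing_inv A ((Matrix.isUnit_iff_isUnit_det A).mp hA)

lemma nonsing_mul {n : ℕ} {A : Mat n} (hA : IsUnit A) : A⁻¹ * A = 1 :=
  Matrix.nonsing_inv_mul A ((Matrix.isUnit_iff_isUnit_det A).mp hA)

lemma term_eq {n : ℕ} (A B : Mat n) :
    A * B * A⁻¹ * B⁻¹ = (A * B) * (B * A)⁻¹ := by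
  rw [Matrix.mul_inv_rev, ← mul_assoc, mul_assoc (A*B)]

/-- `A(A⁻¹ + S) = 1 + AS` for `A` invertible. -/
lemma mul_B {n : ℕ} {A : Mat n} (S : Mat n) (hA : IsUnit A) :
    A * (A⁻¹ + S) = 1 + A * S := by
  rw [mul_add, mul_nonsing hA]

/-- `(A⁻¹ + S)A = 1 + SA` for `A` invertible. -/
lemma B_mul {n : ℕ} {A : Mat n} (S : Mat n) (hA : IsUnit A) :
    (A⁻¹ + S) * A = 1 + S * A := by
  rw [add_mul, nonsing_mul hA]

lemma isUnit_B {n : ℕ} {A S : Mat n} (hA : IsUnit A) (h1 : IsUnit (1 + A * S)) :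
    IsUnit (A⁻¹ + S) := by
  have hAinv : IsUnit (A⁻¹ : Mat n) :=
    ⟨⟨A⁻¹, A, nonsing_mul hA, mul_nonsing hA⟩, rfl⟩
  have h := hAinv.mul h1
  rwa [← mul_B S hA, ← mul_assoc, nonsing_mul hA, one_mul] at h

/-- **Proposition 2 of Crawley-Boevey–Shaw, as used in §8 of Bellamy–Schedler.**  The
assignment `(A_l, A*_l) ↦ (A_l, A_l⁻¹ + A*_l)` is a bijection from the fiber `Ψ⁻¹(1)` of
the multiplicative moment map onto the set of tuples of invertible matrices satisfying
the surface-group relation `Π_l A_lB_lA_l⁻¹B_l⁻¹ = 1` (i.e. onto `Hom(π_g, GL_n(ℂ))`),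
equivariantly for simultaneous conjugation by `GL_n(ℂ)`. -/
theorem stmt_15 (n g : ℕ) (hn : 1 ≤ n) (hg : 1 ≤ g) :
    Set.BijOn (Phi n g) (Src n g) (Tgt n g) ∧
      ∀ (u : GL (Fin n) ℂ) (p : Fin g → Mat n × Mat n), p ∈ Src n g →
        Phi n g (conjAct n g u p) = conjAct n g u (Phi n g p) := by
  constructor
  · refine ⟨?_, ?_, ?_⟩
    · -- MapsTo
      rintro p ⟨hu, hprod⟩
      refine ⟨fun l => ⟨(hu l).1, isUnit_B (hu l).1 (hu l).2.1⟩, ?_⟩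
      rw [← hprod]
      congr 1
      congr 1
      funext l
      obtain ⟨hA, h1, h2⟩ := hu l
      show (p l).1 * (((p l).1)⁻¹ + (p l).2) * ((p l).1)⁻¹ *
          (((p l).1)⁻¹ + (p l).2)⁻¹ = _
      rw [term_eq, mul_B _ hA, B_mul _ hA]
    · -- InjOn
      intro p _ p' _ h
      funext l
      have h1 : (p l).1 = (p' l).1 := congrArg (fun q => (q l).1) h
      have h2 : ((p l).1)⁻¹ + (p l).2 = ((p' l).1)⁻¹ + (p' l).2 :=
        congrArg (fun q => (q l).2) h
      rw [h1] at h2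
      exact Prod.ext h1 (by linear_combination (norm := abel) h2)
    · -- SurjOn
      rintro q ⟨hu, hprod⟩
      refine ⟨fun l => ((q l).1, (q l).2 - ((q l).1)⁻¹), ⟨fun l => ?_, ?_⟩, ?_⟩
      · obtain ⟨hA, hB⟩ := hu l
        have e1 : 1 + (q l).1 * ((q l).2 - ((q l).1)⁻¹) = (q l).1 * (q l).2 := by
          rw [mul_sub, mul_nonsing hA]; abel
        have e2 : 1 + ((q l).2 - ((q l).1)⁻¹) * (q l).1 = (q l).2 * (q l).1 := by
          rw [sub_mul, nonsing_mul hA]; abel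
        exact ⟨hA, e1 ▸ hA.mul hB, e2 ▸ hB.mul hA⟩
      · show (List.ofFn fun l : Fin g =>
            (1 + (q l).1 * ((q l).2 - ((q l).1)⁻¹)) *
            (1 + ((q l).2 - ((q l).1)⁻¹) * (q l).1)⁻¹).prod = 1
        have hf : (fun l : Fin g =>
            (1 + (q l).1 * ((q l).2 - ((q l).1)⁻¹)) *
            (1 + ((q l).2 - ((q l).1)⁻¹) * (q l).1)⁻¹)
            = fun l : Fin g => (q l).1 * (q l).2 * ((q l).1)⁻¹ * ((q l).2)⁻¹ := by
          funext l
          obtain ⟨hA, hB⟩ := hu l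
          have e1 : 1 + (q l).1 * ((q l).2 - ((q l).1)⁻¹) = (q l).1 * (q l).2 := by
            rw [mul_sub, mul_nonsing hA]; abel
          have e2 : 1 + ((q l).2 - ((q l).1)⁻¹) * (q l).1 = (q l).2 * (q l).1 := by
            rw [sub_mul, nonsing_mul hA]; abel
          rw [e1, e2, ← term_eq]
        rw [hf, hprod]
      · funext l
        show ((q l).1, ((q l).1)⁻¹ + ((q l).2 - ((q l).1)⁻¹)) = q l
        rw [add_sub_cancel]
  · -- equivariance
    rintro u p ⟨hu, -⟩
    funext l
    obtain ⟨hA, -, -⟩ := hu l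
    have huv : (u : Mat n) * ((u⁻¹ : GL (Fin n) ℂ) : Mat n) = 1 := u.mul_inv
    have hvu : ((u⁻¹ : GL (Fin n) ℂ) : Mat n) * (u : Mat n) = 1 := u.inv_mul
    have key : ((u : Mat n) * (p l).1 * ((u⁻¹ : GL (Fin n) ℂ) : Mat n))⁻¹
        = (u : Mat n) * ((p l).1)⁻¹ * ((u⁻¹ : GL (Fin n) ℂ) : Mat n) := by
      apply Matrix.inv_eq_right_inv
      calc (u : Mat n) * (p l).1 * ((u⁻¹ : GL (Fin n) ℂ) : Mat n) *
            ((u : Mat n) * ((p l).1)⁻¹ * ((u⁻¹ : GL (Fin n) ℂ) : Mat n))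
          = (u : Mat n) * ((p l).1 * ((((u⁻¹ : GL (Fin n) ℂ) : Mat n) *
              (u : Mat n)) * ((p l).1)⁻¹)) * ((u⁻¹ : GL (Fin n) ℂ) : Mat n) := by
            simp only [mul_assoc]
        _ = 1 := by rw [hvu, one_mul, mul_nonsing hA, mul_one, huv]
    show ((u : Mat n) * (p l).1 * _, _) = _
    refine Prod.ext rfl ?_
    show ((u : Mat n) * (p l).1 * ((u⁻¹ : GL (Fin n) ℂ) : Mat n))⁻¹ +
        (u : Mat n) * (p l).2 * ((u⁻¹ : GL (Fin n) ℂ) : Mat n)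
      = (u : Mat n) * (((p l).1)⁻¹ + (p l).2) * ((u⁻¹ : GL (Fin n) ℂ) : Mat n)
    rw [key, mul_add, add_mul]

end MultiplicativePreprojective
end
end

section
/- Let V = ℂ⁴ with a fixed nondegenerate alternating bilinear form ω, and let sp(V,ω) = {B ∈ End(V) : ω(Bu, w) + ω(u, Bw) = 0 for all u, w ∈ V}. Define φ : V → End(V) by φ(v)(u) = ω(u, v) v. Then: (1) for every v ∈ V, φ(v) ∈ sp(V,ω), φ(v)² = 0, and rank φ(v) ≤ 1; (2) φ(v) = φ(w) if and only if w = v or w = −v; and (3) φ is surjective onto {B ∈ sp(V,ω) : B² = 0 and rank B ≤ 1}. Consequently φ induces a bijection V/{±1} ≅ {B ∈ sp(V,ω) : B² = 0, rank B ≤ 1}. -/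
noncomputable section
namespace MinimalNilpotentSp4

open LinearMap

/-- `sp(V,ω)`: endomorphisms `B` with `ω(Bu,w) + ω(u,Bw) = 0` for all `u, w`. -/
def sp (ω : LinearMap.BilinForm ℂ (Fin 4 → ℂ)) : Set (Module.End ℂ (Fin 4 → ℂ)) :=
  {B | ∀ u w : Fin 4 → ℂ, ω (B u) w + ω u (B w) = 0}

/-- The map `φ : V → End(V)`, `φ(v)(u) = ω(u,v) v`. -/
def φ (ω : LinearMap.BilinForm ℂ (Fin 4 → ℂ)) (v : Fin 4 → ℂ) :
    Module.End ℂ (Fin 4 → ℂ) :=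
  (LinearMap.toSpanSingleton ℂ (Fin 4 → ℂ) v).comp (ω.flip v)

lemma φ_apply (ω : LinearMap.BilinForm ℂ (Fin 4 → ℂ)) (v u : Fin 4 → ℂ) :
    φ ω v u = ω u v • v := rfl

/-- **The identification `𝒩̄²₁ ≅ ℂ⁴/ℤ₂` from §5.1 of Bellamy–Schedler.**
Let `V = ℂ⁴` with a nondegenerate alternating bilinear form `ω`, and let
`φ(v)(u) = ω(u,v)v`.  Then: (1) each `φ(v)` lies in `sp(V,ω)`, squares to zero and has
rank at most one; (2) `φ(v) = φ(w)` iff `w = ±v`; (3) every `B ∈ sp(V,ω)` with `B² = 0`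
and `rank B ≤ 1` is of the form `φ(v)`.  Consequently `φ` induces a bijection
`ℂ⁴/{±1} ≅ {B ∈ sp(V,ω) : B² = 0, rank B ≤ 1}`. -/
theorem stmt_17 (ω : LinearMap.BilinForm ℂ (Fin 4 → ℂ))
    (halt : ∀ v, ω v v = 0) (hnd : ω.Nondegenerate) :
    (∀ v : Fin 4 → ℂ, φ ω v ∈ sp ω ∧ φ ω v * φ ω v = 0 ∧
        Module.finrank ℂ (LinearMap.range (φ ω v)) ≤ 1) ∧
      (∀ v w : Fin 4 → ℂ, φ ω v = φ ω w ↔ (w = v ∨ w = -v)) ∧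
      (∀ B ∈ sp ω, B * B = 0 → Module.finrank ℂ (LinearMap.range B) ≤ 1 →
        ∃ v : Fin 4 → ℂ, φ ω v = B) := by
  have skew : ∀ u w : Fin 4 → ℂ, ω u w = - ω w u := by
    intro u w
    have h := halt (u + w)
    simp only [map_add, LinearMap.add_apply, halt] at h
    linear_combination h
  have hnd' : ∀ v : Fin 4 → ℂ, v ≠ 0 → ∃ u, ω u v ≠ 0 := by
    intro v hv
    by_contra hc
    push_neg at hc
    exact hv (hnd.1 v fun n => by rw [skew, hc n, neg_zero])
  refine ⟨?_, ?_, ?_⟩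
  · intro v
    refine ⟨?_, ?_, ?_⟩
    · intro u w
      simp only [φ_apply, map_smul, LinearMap.smul_apply, smul_eq_mul]
      rw [skew v w]; ring
    · refine LinearMap.ext fun u => ?_
      simp [Module.End.mul_apply, φ_apply, map_smul, smul_smul, halt]
    · by_cases hv : v = 0
      · subst hv
        have h0 : φ ω (0 : Fin 4 → ℂ) = 0 := by
          refine LinearMap.ext fun u => ?_; simp [φ_apply]
        rw [h0, LinearMap.range_zero]
        simp
      · have hle : LinearMap.range (φ ω v) ≤ Submodule.span ℂ {v} := by
          rintro x ⟨u, rfl⟩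
          rw [φ_apply]
          exact Submodule.smul_mem _ _ (Submodule.mem_span_singleton_self v)
        calc Module.finrank ℂ (LinearMap.range (φ ω v))
            ≤ Module.finrank ℂ (Submodule.span ℂ {v}) := Submodule.finrank_mono hle
          _ = 1 := finrank_span_singleton hv
  · intro v w
    constructor
    · intro h
      by_cases hv : v = 0
      · subst hv
        left
        by_contra hw
        obtain ⟨u, hu⟩ := hnd' w hw
        have := DFunLike.congr_fun h u
        rw [φ_apply, φ_apply] at this
        simp only [smul_zero] at this
        rcases smul_eq_zero.mp this.symm with h1 | h1
        · exact hu h1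
        · exact hw h1
      · obtain ⟨u₀, hu₀⟩ := hnd' v hv
        have he : ω u₀ v • v = ω u₀ w • w := by
          have := DFunLike.congr_fun h u₀
          rwa [φ_apply, φ_apply] at this
        have hw0 : ω u₀ w ≠ 0 := by
          intro h0
          rw [h0, zero_smul] at he
          rcases smul_eq_zero.mp he with h1 | h1
          · exact hu₀ h1
          · exact hv h1
        have hwa : w = (ω u₀ v / ω u₀ w) • v := by
          have : w = (ω u₀ w)⁻¹ • (ω u₀ v • v) := by
            rw [he, smul_smul, inv_mul_cancel₀ hw0, one_smul]
          rw [div_eq_inv_mul, ← smul_smul]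
          exact this
        set a := ω u₀ v / ω u₀ w with ha
        have h1 : ω u₀ w = a * ω u₀ v := by
          rw [hwa, map_smul, smul_eq_mul]
        have h2 : ω u₀ v = ω u₀ w * a := by
          have : ω u₀ v • v = (ω u₀ w * a) • v := by
            rw [he, hwa, smul_smul]
          exact smul_left_injective ℂ hv this
        have hz : (a * a - 1) * ω u₀ v = 0 := by
          linear_combination (-a) * h1 - h2
        rcases mul_eq_zero.mp hz with h3 | h3
        · have ha2 : (a - 1) * (a + 1) = 0 := by linear_combination h3
          rcases mul_eq_zero.mp ha2 with h4 | h4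
          · left
            rw [hwa, sub_eq_zero.mp h4, one_smul]
          · right
            rw [hwa, eq_neg_of_add_eq_zero_left h4, neg_one_smul]
        · exact absurd h3 hu₀
    · rintro (rfl | rfl)
      · rfl
      · refine LinearMap.ext fun u => ?_
        rw [φ_apply, φ_apply]
        simp [smul_smul]
  · intro B hB hB2 hrank
    by_cases hB0 : B = 0
    · exact ⟨0, by refine LinearMap.ext fun u => ?_; simp [φ_apply, hB0]⟩
    · rw [Submodule.finrank_le_one_iff_isPrincipal] at hrank
      obtain ⟨x, hx⟩ := hrank
      have hx' : ∀ u, ∃ c : ℂ, B u = c • x := by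
        intro u
        have hm : B u ∈ Submodule.span ℂ {x} := hx ▸ LinearMap.mem_range_self B u
        obtain ⟨c, hc⟩ := Submodule.mem_span_singleton.mp hm
        exact ⟨c, hc.symm⟩
      choose f hf using hx'
      obtain ⟨u₁, hu₁⟩ : ∃ u, B u ≠ 0 := by
        by_contra hc
        push_neg at hc
        exact hB0 (by refine LinearMap.ext fun u => ?_; simp [hc u])
      have hx0 : x ≠ 0 := by
        intro h0
        apply hu₁
        rw [hf u₁, h0, smul_zero]
      obtain ⟨w₀, hw₀⟩ : ∃ w, ω x w ≠ 0 := by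
        by_contra hc
        push_neg at hc
        exact hx0 (hnd.1 x hc)
      have key : ∀ u, f u * ω x w₀ + f w₀ * ω u x = 0 := by
        intro u
        have h := hB u w₀
        rw [hf u, hf w₀] at h
        simpa [map_smul, smul_eq_mul] using h
      have hfu : ∀ u, f u = (f w₀ / ω x w₀) * ω x u := by
        intro u
        have hk := key u
        have hs := skew u x
        field_simp
        linear_combination hk - f w₀ * hs
      have hc0 : f w₀ / ω x w₀ ≠ 0 := by
        intro h0
        apply hu₁
        rw [hf u₁, hfu u₁, h0, zero_mul, zero_smul]
      obtain ⟨s, hs⟩ := IsAlgClosed.exists_pow_nat_eq (-(f w₀ / ω x w₀)) (n := 2) two_pos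
      refine ⟨s • x, ?_⟩
      refine LinearMap.ext fun u => ?_
      rw [φ_apply, hf u, hfu u, map_smul, smul_eq_mul, smul_smul]
      congr 1
      have h3 := skew u x
      linear_combination (ω u x) * hs - (f w₀ / ω x w₀) * h3
  

end MinimalNilpotentSp4
end
end
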